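/- (Lemma 2.4(1).) Let k ≥ 1 and let r : Fin k → ZMod 12 be such that r i is odd for some i. Define f_r : (Fin k → ZMod 12) → ZMod 12 by f_r x = 4 if either x i − r i ∈ {0,4,8} for every i, or x i + r i ∈ {0,4,8} for every i, and f_r x = 0 otherwise. Then f_r ∈ Clo_k(L). -/

import Mathlib

/-- The natural projection `ZMod 12 → ZMod 4`. -/
def pi4 : ZMod 12 →+* ZMod 4 := ZMod.castHom (show (4:ℕ) ∣ 12 by norm_num) (ZMod 4)

/-- The cocycle `t` of Vaughan–Lee's loop. -/
def t (x y : ZMod 12) : ZMod 12 :=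
  if (pi4 x = 1 ∧ pi4 y = 3) ∨ (pi4 x = 3 ∧ pi4 y = 1) then 4 else 0

/-- The multiplication of Vaughan–Lee's loop `L`. -/
def mulL (x y : ZMod 12) : ZMod 12 := x + y + t x y

/-- `InClo k h` means `h` is a `k`-ary term function of `L`:
`h` lies in the closure of the projections under the pointwise loop operation. -/
inductive InClo (k : ℕ) : ((Fin k → ZMod 12) → ZMod 12) → Prop
  | proj (i : Fin k) : InClo k (fun x => x i)
  | mul {g h : (Fin k → ZMod 12) → ZMod 12} :
      InClo k g → InClo k h → InClo k (fun x => mulL (g x) (h x))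

namespace VLaux

def t4 (p q : ZMod 4) : ZMod 12 := if (p = 1 ∧ q = 3) ∨ (p = 3 ∧ q = 1) then 4 else 0

lemma t_eq (x y : ZMod 12) : t x y = t4 (pi4 x) (pi4 y) := rfl

lemma t4_tor : ∀ p q : ZMod 4, 3 * t4 p q = 0 := by decide

lemma pi4_of_tor : ∀ z : ZMod 12, 3 * z = 0 → pi4 z = 0 := by decide

lemma t4_neg : ∀ p : ZMod 4, t4 p (-p) = if p = 1 ∨ p = 3 then 4 else 0 := by decide

variable {k : ℕ}

def dotp (n x : Fin k → ZMod 12) : ZMod 12 := ∑ i, n i * x i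

noncomputable def ph (n : Fin k → ZMod 12) (x : Fin k → ZMod 12) : ZMod 4 := pi4 (dotp n x)

lemma dotp_add (n m x : Fin k → ZMod 12) : dotp (n + m) x = dotp n x + dotp m x := by
  simp [dotp, add_mul, Finset.sum_add_distrib]

lemma dotp_zero (x : Fin k → ZMod 12) : dotp (0 : Fin k → ZMod 12) x = 0 := by
  simp [dotp]

lemma dotp_neg (n x : Fin k → ZMod 12) : dotp (-n) x = -dotp n x := by
  simp [dotp, neg_mul]

lemma ph_add (n m x : Fin k → ZMod 12) : ph (n + m) x = ph n x + ph m x := by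
  simp [ph, dotp_add]

lemma ph_zero (x : Fin k → ZMod 12) : ph (0 : Fin k → ZMod 12) x = 0 := by
  simp [ph, dotp_zero]

lemma ph_neg (n x : Fin k → ZMod 12) : ph (-n) x = -ph n x := by
  simp [ph, dotp_neg]

def Good (n : Fin k → ZMod 12) (F : (Fin k → ZMod 12) → ZMod 12) : Prop :=
  (∀ x, 3 * F x = 0) ∧ InClo k (fun x => dotp n x + F x)

lemma good_congr {n n' : Fin k → ZMod 12} {F F'} (hn : n = n') (hF : ∀ x, F x = F' x)
    (h : Good n F) : Good n' F' := by
  subst hn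
  have : F = F' := funext hF
  subst this
  exact h

lemma good_mul {n m : Fin k → ZMod 12} {F G} (hF : Good n F) (hG : Good m G) :
    Good (n + m) (fun x => F x + G x + t4 (ph n x) (ph m x)) := by
  constructor
  · intro x
    linear_combination hF.1 x + hG.1 x + t4_tor (ph n x) (ph m x)
  · have key : ∀ x, mulL (dotp n x + F x) (dotp m x + G x)
        = dotp (n + m) x + (F x + G x + t4 (ph n x) (ph m x)) := by
      intro x
      have h1 : pi4 (dotp n x + F x) = ph n x := by
        rw [map_add, pi4_of_tor _ (hF.1 x), add_zero]; rfl
      have h2 : pi4 (dotp m x + G x) = ph m x := by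
        rw [map_add, pi4_of_tor _ (hG.1 x), add_zero]; rfl
      rw [mulL, t_eq, h1, h2, dotp_add]
      ring
    have := InClo.mul hF.2 hG.2
    simpa only [key] using this


def ee (i : Fin k) : Fin k → ZMod 12 := fun j => if j = i then 1 else 0

lemma dotp_ee (i : Fin k) (x : Fin k → ZMod 12) : dotp (ee i) x = x i := by
  simp [dotp, ee, ite_mul, one_mul, zero_mul, Finset.sum_ite_eq']

lemma good_ee (i : Fin k) : Good (ee i) (fun _ => 0) := by
  constructor
  · intro x; ring
  · have : (fun x : Fin k → ZMod 12 => x i) = fun x => dotp (ee i) x + 0 := by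
      funext x; rw [dotp_ee, add_zero]
    rw [← this]
    exact InClo.proj i

def Reach (n : Fin k → ZMod 12) : Prop := ∃ F, Good n F

lemma reach_add {n m : Fin k → ZMod 12} (hn : Reach n) (hm : Reach m) : Reach (n + m) := by
  obtain ⟨F, hF⟩ := hn
  obtain ⟨G, hG⟩ := hm
  exact ⟨_, good_mul hF hG⟩

lemma reach_congr {n n' : Fin k → ZMod 12} (h : n = n') (hn : Reach n) : Reach n' := h ▸ hn

lemma reach_mul_ee (c : ℕ) (i : Fin k) : Reach (fun j => ((c + 1 : ℕ) : ZMod 12) * ee i j) := by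
  induction c with
  | zero =>
    refine reach_congr ?_ ⟨_, good_ee i⟩
    funext j; simp
  | succ c ih =>
    have h := reach_add ih ⟨_, good_ee i⟩
    refine reach_congr ?_ h
    funext j
    show ((c + 1 : ℕ) : ZMod 12) * ee i j + ee i j = _
    push_cast
    ring

lemma reach_zero (i : Fin k) : Reach (0 : Fin k → ZMod 12) := by
  refine reach_congr ?_ (reach_mul_ee 11 i)
  funext j
  show ((12 : ℕ) : ZMod 12) * ee i j = 0
  rw [show ((12:ℕ) : ZMod 12) = 0 by decide, zero_mul]

lemma reach_smul_ee (c : ZMod 12) (i : Fin k) : Reach (fun j => c * ee i j) := by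
  rcases Nat.eq_zero_or_pos c.val with h | h
  · have hc : c = 0 := by
      have := ZMod.natCast_rightInverse (n := 12) c
      rw [← this, h]; rfl
    refine reach_congr ?_ (reach_zero i)
    funext j; rw [hc, zero_mul]; rfl
  · obtain ⟨d, hd⟩ := Nat.exists_eq_add_of_lt h
    have hc : ((d + 1 : ℕ) : ZMod 12) = c := by
      have := ZMod.natCast_rightInverse (n := 12) c
      rw [← this]
      congr 1
      omega
    refine reach_congr ?_ (reach_mul_ee d i)
    funext j; rw [hc]

lemma reach_all (i0 : Fin k) (n : Fin k → ZMod 12) : Reach n := by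
  have hrep : n = ∑ i, (fun j => n i * ee i j) := by
    funext j
    rw [Finset.sum_apply]
    simp [ee, mul_ite, mul_one, mul_zero, Finset.sum_ite_eq']
  rw [hrep]
  exact Finset.sum_induction _ Reach (fun a b ha hb => reach_add ha hb) (reach_zero i0)
    (fun i _ => reach_smul_ee (n i) i)

lemma good_zero_add {F G : (Fin k → ZMod 12) → ZMod 12}
    (hF : Good 0 F) (hG : Good 0 G) : Good 0 (fun x => F x + G x) := by
  have h := good_mul hF hG
  refine good_congr (by rw [add_zero]) ?_ h
  intro x
  rw [ph_zero]
  show F x + G x + t4 0 0 = F x + G x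
  rw [show t4 0 0 = 0 from rfl, add_zero]

lemma good_zero_zero (i0 : Fin k) : Good 0 (fun _ : Fin k → ZMod 12 => (0 : ZMod 12)) := by
  obtain ⟨F, hF⟩ := reach_all i0 (0 : Fin k → ZMod 12)
  have h2 := good_zero_add (good_zero_add hF hF) hF
  refine good_congr rfl ?_ h2
  intro x
  linear_combination hF.1 x

def assocV (A B C : ZMod 4) : ZMod 12 := t4 B C + t4 A (B + C) + 2 * t4 A B + 2 * t4 (A + B) C

noncomputable def AssocC (a b c : Fin k → ZMod 12) : (Fin k → ZMod 12) → ZMod 12 :=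
  fun x => assocV (ph a x) (ph b x) (ph c x)

lemma good_assoc (i0 : Fin k) (a b c : Fin k → ZMod 12) : Good 0 (AssocC a b c) := by
  set d : Fin k → ZMod 12 := -(a + b + c) with hd
  obtain ⟨Fa, hFa⟩ := reach_all i0 a
  obtain ⟨Fb, hFb⟩ := reach_all i0 b
  obtain ⟨Fc, hFc⟩ := reach_all i0 c
  obtain ⟨Fd, hFd⟩ := reach_all i0 d
  have w1 : Good (a + b + c) (fun x => (Fa x + Fb x + t4 (ph a x) (ph b x)) + Fc x
      + t4 (ph (a + b) x) (ph c x)) := good_mul (good_mul hFa hFb) hFc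
  have w2' : Good (b + c) (fun x => Fb x + Fc x + t4 (ph b x) (ph c x)) := good_mul hFb hFc
  have w2 : Good (a + b + c) (fun x => Fa x + (Fb x + Fc x + t4 (ph b x) (ph c x))
      + t4 (ph a x) (ph (b + c) x)) := by
    refine good_congr ?_ (fun _ => rfl) (good_mul hFa w2')
    rw [add_assoc]
  have u1 := good_mul w1 hFd
  have u2 := good_mul w2 hFd
  have hlvl : a + b + c + d = 0 := by rw [hd]; abel
  have v1 := good_congr hlvl (fun _ => rfl) u1
  have v2 := good_congr hlvl (fun _ => rfl) u2
  have S := good_zero_add v2 (good_zero_add v1 v1)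
  refine good_congr rfl ?_ S
  intro x
  show _ = assocV (ph a x) (ph b x) (ph c x)
  rw [assocV]
  rw [ph_add b c, ph_add a b]
  linear_combination hFa.1 x + hFb.1 x + hFc.1 x + hFd.1 x
    + t4_tor (ph (a + b + c) x) (ph d x)


inductive InW : ((Fin k → ZMod 12) → ZMod 12) → Prop
  | assoc (a b c : Fin k → ZMod 12) : InW (AssocC a b c)
  | zero : InW (fun _ => 0)
  | add {F G} : InW F → InW G → InW (fun x => F x + G x)

lemma InW_congr {F G : (Fin k → ZMod 12) → ZMod 12} (h : ∀ x, F x = G x) (hF : InW F) :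
    InW G := by
  have : F = G := funext h
  exact this ▸ hF

lemma InW_good (i0 : Fin k) {F : (Fin k → ZMod 12) → ZMod 12} (h : InW F) : Good 0 F := by
  induction h with
  | assoc a b c => exact good_assoc i0 a b c
  | zero => exact good_zero_zero i0
  | add hF hG ihF ihG => exact good_zero_add ihF ihG

set_option maxHeartbeats 1000000 in
lemma key_id : ∀ U q W : ZMod 4, ∀ V, V = U + q →
    (if W = 0 then t4 U q else 0) =
      assocV (W) (W) (V) +
      assocV (W) (W) ((V + V)) +
      assocV (W) (W) ((V + V)) +
      assocV (W) (W) (U) +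
      assocV (W) (W) (U) +
      assocV (W) (W) ((U + U)) +
      assocV (W) (W) (((U + U) + V)) +
      assocV (W) (W) (((U + U) + V)) +
      assocV (W) (W) ((((U + U) + V) + V)) +
      assocV (W) (W) (((U + U) + U)) +
      assocV (W) (V) (V) +
      assocV (W) (V) (V) +
      assocV (W) (V) (((U + U) + V)) +
      assocV (W) (U) (U) +
      assocV (W) (U) (U) +
      assocV (W) (U) ((U + V)) +
      assocV (W) (U) ((U + V)) +
      assocV (V) (V) (U) +
      assocV (V) (V) (U) +
      assocV (V) (V) ((U + U)) +
      assocV (V) (V) (((U + U) + U)) +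
      assocV (V) (U) (U) +
      assocV (U) (U) ((U + U)) := by decide

set_option maxHeartbeats 2000000 in
lemma InW_core (a b wf : Fin k → ZMod 12) :
    InW (fun x => if ph wf x = 0 then t4 (ph a x) (ph b x) else 0) := by
  have H := (InW.add (InW.add (InW.add (InW.add (InW.add (InW.add (InW.add (InW.add (InW.add (InW.add (InW.add (InW.add (InW.add (InW.add (InW.add (InW.add (InW.add (InW.add (InW.add (InW.add (InW.add (InW.add (InW.assoc (wf) (wf) ((a + b))) (InW.assoc (wf) (wf) (((a + b) + (a + b))))) (InW.assoc (wf) (wf) (((a + b) + (a + b))))) (InW.assoc (wf) (wf) (a))) (InW.assoc (wf) (wf) (a))) (InW.assoc (wf) (wf) ((a + a)))) (InW.assoc (wf) (wf) (((a + a) + (a + b))))) (InW.assoc (wf) (wf) (((a + a) + (a + b))))) (InW.assoc (wf) (wf) ((((a + a) + (a + b)) + (a + b))))) (InW.assoc (wf) (wf) (((a + a) + a)))) (InW.assoc (wf) ((a + b)) ((a + b)))) (InW.assoc (wf) ((a + b)) ((a + b)))) (InW.assoc (wf) ((a + b)) (((a + a) + (a + b))))) (InW.assoc (wf) (a) (a)))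 (InW.assoc (wf) (a) (a))) (InW.assoc (wf) (a) ((a + (a + b))))) (InW.assoc (wf) (a) ((a + (a + b))))) (InW.assoc ((a + b)) ((a + b)) (a))) (InW.assoc ((a + b)) ((a + b)) (a))) (InW.assoc ((a + b)) ((a + b)) ((a + a)))) (InW.assoc ((a + b)) ((a + b)) (((a + a) + a)))) (InW.assoc ((a + b)) (a) (a))) (InW.assoc (a) (a) ((a + a))))
  refine InW_congr ?_ H
  intro x
  have hk := key_id (ph a x) (ph b x) (ph wf x) (ph a x + ph b x) rfl
  simp only [AssocC, ph_add]
  exact hk.symm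

lemma InW_atom (a b : Fin k → ZMod 12) : InW (fun x => t4 (ph a x) (ph b x)) := by
  refine InW_congr ?_ (InW_core a b 0)
  intro x
  rw [ph_zero, if_pos rfl]

set_option maxHeartbeats 2000000 in
lemma InW_mulC (wf : Fin k → ZMod 12) {F : (Fin k → ZMod 12) → ZMod 12} (h : InW F) :
    InW (fun x => if ph wf x = 0 then F x else 0) := by
  induction h with
  | assoc a b c =>
    have H := InW.add (InW.add (InW.add (InW_core b c wf) (InW_core a (b + c) wf))
        (InW.add (InW_core a b wf) (InW_core a b wf)))
        (InW.add (InW_core (a + b) c wf) (InW_core (a + b) c wf))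
    refine InW_congr ?_ H
    intro x
    by_cases hs : ph wf x = 0
    · simp only [if_pos hs, AssocC, assocV, ph_add]
      ring
    · simp only [if_neg hs, add_zero]
  | zero =>
    refine InW_congr ?_ (InW.zero (k := k))
    intro x
    by_cases hs : ph wf x = 0
    · rw [if_pos hs]
    · rw [if_neg hs]
  | add hF hG ihF ihG =>
    have H := InW.add ihF ihG
    refine InW_congr ?_ H
    intro x
    by_cases hs : ph wf x = 0
    · simp only [if_pos hs]
    · simp only [if_neg hs, add_zero]


def vf (r : Fin k → ZMod 12) (i0 i : Fin k) : Fin k → ZMod 12 :=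
  fun j => r i0 * ee i j - r i * ee i0 j

lemma sum_cmul (c : ZMod 12) (i : Fin k) (x : Fin k → ZMod 12) :
    (∑ j, (c * ee i j) * x j) = c * x i := by
  have h : (∑ j, (c * ee i j) * x j) = c * ∑ j, ee i j * x j := by
    rw [Finset.mul_sum]
    apply Finset.sum_congr rfl
    intro j _
    ring
  rw [h, show (∑ j, ee i j * x j) = x i from dotp_ee i x]

lemma dotp_vf (r : Fin k → ZMod 12) (i0 i : Fin k) (x : Fin k → ZMod 12) :
    dotp (vf r i0 i) x = r i0 * x i - r i * x i0 := by
  simp only [dotp, vf, sub_mul, Finset.sum_sub_distrib]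
  rw [sum_cmul, sum_cmul]

lemma ph_vf (r : Fin k → ZMod 12) (i0 i : Fin k) (x : Fin k → ZMod 12) :
    ph (vf r i0 i) x = pi4 (r i0) * pi4 (x i) - pi4 (r i) * pi4 (x i0) := by
  rw [ph, dotp_vf, map_sub, map_mul, map_mul]

lemma ph_ee (i : Fin k) (x : Fin k → ZMod 12) : ph (ee i) x = pi4 (x i) := by
  rw [ph, dotp_ee]

noncomputable def chain (r : Fin k → ZMod 12) (i0 : Fin k) (l : List (Fin k)) :
    (Fin k → ZMod 12) → ZMod 12 :=
  fun x => if (∀ i ∈ l, ph (vf r i0 i) x = 0)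
    then t4 (ph (ee i0) x) (ph (-ee i0) x) else 0

lemma InW_chain (r : Fin k → ZMod 12) (i0 : Fin k) (l : List (Fin k)) :
    InW (chain r i0 l) := by
  induction l with
  | nil =>
    refine InW_congr ?_ (InW_atom (ee i0) (-ee i0))
    intro x
    simp [chain]
  | cons i l ih =>
    refine InW_congr ?_ (InW_mulC (vf r i0 i) ih)
    intro x
    by_cases h1 : ph (vf r i0 i) x = 0
    · rw [if_pos h1]
      show chain r i0 l x = chain r i0 (i :: l) x
      simp only [chain]
      refine if_congr ?_ rfl rfl
      constructor
      · intro hall j hj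
        rcases List.mem_cons.mp hj with rfl | hj
        · exact h1
        · exact hall j hj
      · intro hall j hj
        exact hall j (List.mem_cons_of_mem _ hj)
    · rw [if_neg h1]
      show (0 : ZMod 12) = chain r i0 (i :: l) x
      simp only [chain]
      rw [if_neg]
      · intro hall
        exact h1 (hall i (List.mem_cons_self (a := i) (l := l)))

lemma iff4 {k : ℕ} (a y : Fin k → ZMod 4) (i0 : Fin k) (ha : a i0 = 1 ∨ a i0 = 3) :
    ((∀ i, y i = a i) ∨ (∀ i, y i = -a i)) ↔
      ((∀ i, a i0 * y i - a i * y i0 = 0) ∧ (y i0 = 1 ∨ y i0 = 3)) := by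
  have hsq : a i0 * a i0 = 1 := by rcases ha with h | h <;> rw [h] <;> decide
  constructor
  · rintro (h | h)
    · refine ⟨fun i => by rw [h i, h i0]; ring, ?_⟩
      rw [h i0]; exact ha
    · refine ⟨fun i => by rw [h i, h i0]; ring, ?_⟩
      rw [h i0]
      rcases ha with h1 | h1 <;> rw [h1] <;> decide
  · rintro ⟨hlin, hy⟩
    have hmul : ∀ i, a i0 * y i = a i * y i0 := fun i => by linear_combination hlin i
    have hcase : y i0 = a i0 ∨ y i0 = -a i0 := by
      rcases ha with h1 | h1 <;> rcases hy with h2 | h2 <;> rw [h1, h2] <;> decide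
    rcases hcase with h | h
    · left
      intro i
      calc y i = (a i0 * a i0) * y i := by rw [hsq, one_mul]
        _ = a i0 * (a i * y i0) := by rw [mul_assoc, hmul i]
        _ = (a i0 * a i0) * a i := by rw [h]; ring
        _ = a i := by rw [hsq, one_mul]
    · right
      intro i
      calc y i = (a i0 * a i0) * y i := by rw [hsq, one_mul]
        _ = a i0 * (a i * y i0) := by rw [mul_assoc, hmul i]
        _ = -((a i0 * a i0) * a i) := by rw [h]; ring
        _ = -a i := by rw [hsq, one_mul]

lemma odd_pi4 : ∀ c z : ZMod 12, z = 2 * c + 1 → pi4 z = 1 ∨ pi4 z = 3 := by decide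

lemma mem_048 : ∀ z : ZMod 12, z ∈ ({0, 4, 8} : Set (ZMod 12)) ↔ pi4 z = 0 := by
  intro z
  simp only [Set.mem_insert_iff, Set.mem_singleton_iff]
  revert z
  decide

end VLaux


open VLaux in
open scoped Classical in
theorem stmt_10 (k : ℕ) (hk : 1 ≤ k) (r : Fin k → ZMod 12)
    (hr : ∃ i, Odd (r i)) :
    InClo k (fun x =>
      if (∀ i, x i - r i ∈ ({0, 4, 8} : Set (ZMod 12))) ∨
         (∀ i, x i + r i ∈ ({0, 4, 8} : Set (ZMod 12)))
      then (4 : ZMod 12) else 0) := by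
  obtain ⟨i0, hodd⟩ := hr
  have ha : pi4 (r i0) = 1 ∨ pi4 (r i0) = 3 := by
    obtain ⟨c, hc⟩ := hodd
    exact odd_pi4 c _ hc
  have hG := InW_good i0 (InW_chain r i0 (List.finRange k))
  have hclo := hG.2
  have heq : (fun x => dotp (0 : Fin k → ZMod 12) x + chain r i0 (List.finRange k) x)
      = (fun x : Fin k → ZMod 12 =>
        if (∀ i, x i - r i ∈ ({0, 4, 8} : Set (ZMod 12))) ∨
           (∀ i, x i + r i ∈ ({0, 4, 8} : Set (ZMod 12)))
        then (4 : ZMod 12) else 0) := by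
    funext x
    rw [dotp_zero, zero_add]
    have hatom : t4 (ph (ee i0) x) (ph (-ee i0) x)
        = if pi4 (x i0) = 1 ∨ pi4 (x i0) = 3 then (4 : ZMod 12) else 0 := by
      rw [ph_neg, ph_ee, t4_neg]
    have hbig : ((∀ i, x i - r i ∈ ({0, 4, 8} : Set (ZMod 12))) ∨
         (∀ i, x i + r i ∈ ({0, 4, 8} : Set (ZMod 12)))) ↔
        ((∀ i, ph (vf r i0 i) x = 0) ∧ (pi4 (x i0) = 1 ∨ pi4 (x i0) = 3)) := by
      have h4 := iff4 (fun i => pi4 (r i)) (fun i => pi4 (x i)) i0 ha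
      have hc1 : (∀ i, x i - r i ∈ ({0, 4, 8} : Set (ZMod 12))) ↔
          (∀ i, pi4 (x i) = pi4 (r i)) := by
        refine forall_congr' fun i => ?_
        rw [mem_048, map_sub, sub_eq_zero]
      have hc2 : (∀ i, x i + r i ∈ ({0, 4, 8} : Set (ZMod 12))) ↔
          (∀ i, pi4 (x i) = -pi4 (r i)) := by
        refine forall_congr' fun i => ?_
        rw [mem_048, map_add, add_eq_zero_iff_eq_neg]
      have hc3 : (∀ i, ph (vf r i0 i) x = 0) ↔
          (∀ i, pi4 (r i0) * pi4 (x i) - pi4 (r i) * pi4 (x i0) = 0) := by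
        refine forall_congr' fun i => ?_
        rw [ph_vf]
      rw [hc1, hc2, hc3]
      exact h4
    have hlist : (∀ i ∈ List.finRange k, ph (vf r i0 i) x = 0) ↔
        (∀ i, ph (vf r i0 i) x = 0) := by
      constructor
      · intro h i; exact h i (List.mem_finRange i)
      · intro h i _; exact h i
    by_cases hC : (∀ i, x i - r i ∈ ({0, 4, 8} : Set (ZMod 12))) ∨
         (∀ i, x i + r i ∈ ({0, 4, 8} : Set (ZMod 12)))
    · rw [if_pos hC]
      obtain ⟨hlin, hodd'⟩ := hbig.mp hC
      show chain r i0 (List.finRange k) x = 4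
      simp only [chain]
      rw [if_pos (hlist.mpr hlin), hatom, if_pos hodd']
    · rw [if_neg hC]
      show chain r i0 (List.finRange k) x = 0
      simp only [chain]
      by_cases hL : ∀ i ∈ List.finRange k, ph (vf r i0 i) x = 0
      · rw [if_pos hL, hatom, if_neg]
        intro hodd'
        exact hC (hbig.mpr ⟨hlist.mp hL, hodd'⟩)
      · rw [if_neg hL]
  exact heq ▸ hclo
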